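/- If 1 ≤ p ≤ n and l_p ≥ 2, then there exists an index j with s_j = a_2^{(p)} and t_j = p; that is, the pair (a_2^{(p)}, p) is one of the given relation intervals [s_j, t_j]. -/
import Mathlib


/-- `d(p) = max { s j : t j ≤ p }`, with `⊥` meaning "undefined" (i.e. `-∞`). -/
noncomputable def dvalue (m : ℕ) (s t : ℕ → ℤ) (p : ℤ) : WithBot ℤ :=
  ((Finset.range m).filter (fun j => t j ≤ p)).sup (fun j => (s j : WithBot ℤ))

/-- `d†(p) = min { t j : s j ≥ p }`, with `⊤` meaning "undefined" (i.e. `+∞`). -/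
noncomputable def ddual (m : ℕ) (s t : ℕ → ℤ) (p : ℤ) : WithTop ℤ :=
  ((Finset.range m).filter (fun j => p ≤ s j)).inf (fun j => (t j : WithTop ℤ))

/-- The extension of `d` to `WithBot ℤ`, sending `⊥` to `⊥`. -/
noncomputable def dW (m : ℕ) (s t : ℕ → ℤ) : WithBot ℤ → WithBot ℤ :=
  WithBot.recBotCoe ⊥ (dvalue m s t)

/-- The extension of `d†` to `WithTop ℤ`, sending `⊤` to `⊤`. -/
noncomputable def dtW (m : ℕ) (s t : ℕ → ℤ) : WithTop ℤ → WithTop ℤ :=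
  WithTop.recTopCoe ⊤ (ddual m s t)

/-- The (total extension of the) sequence `a_i^{(p)}`:
`a_0 = p`, `a_1 = p - 1`, `a_{i+2} = d(a_i)`.  For `i ≤ l_p` this agrees with the
sequence of the paper. -/
noncomputable def aSeq (m : ℕ) (s t : ℕ → ℤ) (p : ℤ) : ℕ → WithBot ℤ
  | 0 => (p : WithBot ℤ)
  | 1 => ((p - 1 : ℤ) : WithBot ℤ)
  | i + 2 => dW m s t (aSeq m s t p i)

/-- The length `l_p`: `l_0 = 0`, and for `p ≠ 0` it is the least `j ≥ 1` with
`d(a_{j-1}^{(p)}) = d(a_j^{(p)})` (undefined values compared as `⊥`). -/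
noncomputable def lSeq (m : ℕ) (s t : ℕ → ℤ) (p : ℤ) : ℕ :=
  if p = 0 then 0
  else sInf {j : ℕ | 1 ≤ j ∧ dW m s t (aSeq m s t p (j - 1)) = dW m s t (aSeq m s t p j)}

/-- The (total extension of the) dual sequence `a_i^{(p)†}`:
`a_0 = p`, `a_1 = p + 1`, `a_{i+2} = d†(a_i)`. -/
noncomputable def aSeqD (m : ℕ) (s t : ℕ → ℤ) (p : ℤ) : ℕ → WithTop ℤ
  | 0 => (p : WithTop ℤ)
  | 1 => ((p + 1 : ℤ) : WithTop ℤ)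
  | i + 2 => dtW m s t (aSeqD m s t p i)

/-- The dual length `l_p†`: `l_n† = 0`, and for `p ≠ n` it is the least `j ≥ 1` with
`d†(a_{j-1}^{(p)†}) = d†(a_j^{(p)†})` (undefined values compared as `⊤`). -/
noncomputable def lSeqD (n : ℤ) (m : ℕ) (s t : ℕ → ℤ) (p : ℤ) : ℕ :=
  if p = n then 0
  else sInf {j : ℕ | 1 ≤ j ∧ dtW m s t (aSeqD m s t p (j - 1)) = dtW m s t (aSeqD m s t p j)}

theorem relation_of_a_two
    (n : ℤ) (m : ℕ) (s t : ℕ → ℤ)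
    (hn : 0 ≤ n)
    (hsmono : ∀ i j : ℕ, i < j → j < m → s i < s j)
    (htmono : ∀ i j : ℕ, i < j → j < m → t i < t j)
    (hs0 : ∀ j : ℕ, j < m → 0 ≤ s j)
    (htn : ∀ j : ℕ, j < m → t j ≤ n)
    (hlen : ∀ j : ℕ, j < m → s j + 2 ≤ t j)
    (p : ℤ) (hp1 : 1 ≤ p) (hpn : p ≤ n)
    (hl : 2 ≤ lSeq m s t p) :
    ∃ j : ℕ, j < m ∧ (s j : WithBot ℤ) = aSeq m s t p 2 ∧ t j = p := by

  have hp0 : p ≠ 0 := by omega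
  rw [lSeq, if_neg hp0] at hl
  -- d(p) ≠ d(p-1)
  have hne : dvalue m s t p ≠ dvalue m s t (p - 1) := by
    intro h
    have h1 : 1 ∈ {j : ℕ | 1 ≤ j ∧ dW m s t (aSeq m s t p (j - 1)) =
        dW m s t (aSeq m s t p j)} := by
      exact ⟨le_refl 1, h⟩
    have := Nat.sInf_le h1
    omega
  -- find j with t j = p
  by_cases hex : ∃ j : ℕ, j < m ∧ t j = p
  · obtain ⟨j, hjm, hjt⟩ := hex
    refine ⟨j, hjm, ?_, hjt⟩
    show (s j : WithBot ℤ) = dvalue m s t p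
    unfold dvalue
    apply le_antisymm
    · apply Finset.le_sup (f := fun j => (s j : WithBot ℤ))
      simp only [Finset.mem_filter, Finset.mem_range]
      exact ⟨hjm, le_of_eq hjt⟩
    · apply Finset.sup_le
      intro i hi
      simp only [Finset.mem_filter, Finset.mem_range] at hi
      have : i ≤ j := by
        by_contra hij
        have := htmono j i (by omega) hi.1
        omega
      rcases eq_or_lt_of_le this with rfl | hlt
      · exact le_refl _
      · exact_mod_cast le_of_lt (hsmono i j hlt hjm)
  · exfalso
    apply hne
    unfold dvalue
    congr 1
    apply Finset.filter_congr
    intro i hi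
    simp only [Finset.mem_range] at hi
    have : t i ≠ p := fun h => hex ⟨i, hi, h⟩
    omega
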